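/- Let d ≥ 1 be an integer coprime to q. Then the group E_d(K) contains no element of order 2. -/

import Mathlib

open Polynomial

lemma aux_poly {F : Type} [Field F] (h4 : (4:F) ≠ 0) (d : ℕ) (hd : 1 ≤ d)
    (a : F[X]) (h : a^2*(a-1) = C 4 * X ^ d) : False := by
  have hXp : Prime (X : F[X]) := Polynomial.prime_X
  have hC4 : (C 4 : F[X]) ≠ 0 := by simpa using h4
  have hdeg0 : a.natDegree = 0 → False := by
    intro hn
    have ha : a = C (a.coeff 0) := (Polynomial.eq_C_of_natDegree_eq_zero hn)
    have := congrArg (fun q => Polynomial.coeff q d) h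
    rw [ha] at this
    rw [show (C (a.coeff 0))^2 * (C (a.coeff 0) - 1) = C ((a.coeff 0)^2 * (a.coeff 0 - 1)) by
      simp only [map_mul, map_pow, map_sub, map_one]] at this
    simp only [Polynomial.coeff_C, Polynomial.coeff_C_mul, Polynomial.coeff_X_pow,
      if_neg (by omega : ¬ d = 0)] at this
    simp at this
    exact h4 this.symm
  -- eval at 0
  have h0 := congrArg (fun q => Polynomial.eval 0 q) h
  simp only [Polynomial.eval_mul, Polynomial.eval_pow, Polynomial.eval_sub, Polynomial.eval_C,
    Polynomial.eval_X, Polynomial.eval_one, zero_pow (by omega : d ≠ 0), mul_zero] at h0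
  have hc0 : a.coeff 0 = a.eval 0 := (Polynomial.coeff_zero_eq_eval_zero a)
  rcases mul_eq_zero.mp h0 with h0' | h0'
  · -- a(0) = 0, so X ∤ a - 1
    have hnd : ¬ (X : F[X]) ∣ (a - 1) := by
      rw [Polynomial.X_dvd_iff]
      have : a.eval 0 = 0 := by
        have := pow_eq_zero_iff (n := 2) (by norm_num) |>.mp h0'
        exact this
      simp [Polynomial.coeff_sub, hc0, this]
    have hcop : IsCoprime (a - 1) ((X:F[X]) ^ d) :=
      ((hXp.coprime_iff_not_dvd.mpr hnd).symm).pow_right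
    have hdvd : (a - 1) ∣ C 4 * X ^ d := ⟨a^2, by rw [← h]; ring⟩
    have hdvd4 : (a - 1) ∣ C 4 := hcop.dvd_of_dvd_mul_right hdvd
    have hle : (a - 1).natDegree ≤ 0 := by
      simpa using Polynomial.natDegree_le_of_dvd hdvd4 hC4
    have : a.natDegree = 0 := by
      have : a = (a - 1) + 1 := by ring
      rw [this]
      exact Nat.le_zero.mp ((Polynomial.natDegree_add_le _ _).trans (by simpa using hle))
    exact hdeg0 this
  · -- a(0) = 1, so X ∤ a
    have hnd : ¬ (X : F[X]) ∣ a := by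
      rw [Polynomial.X_dvd_iff, hc0]
      intro hz
      rw [hz] at h0'
      simpa using h0'
    have hcop : IsCoprime a ((X:F[X]) ^ d) :=
      ((hXp.coprime_iff_not_dvd.mpr hnd).symm).pow_right
    have hdvd : a ∣ C 4 * X ^ d := ⟨a * (a-1), by rw [← h]; ring⟩
    have hdvd4 : a ∣ C 4 := hcop.dvd_of_dvd_mul_right hdvd
    exact hdeg0 (by simpa using Polynomial.natDegree_le_of_dvd hdvd4 hC4)

lemma aux_ratfunc {F : Type} [Field F] (h4 : (4:F) ≠ 0) (d : ℕ) (hd : 1 ≤ d)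
    (u : RatFunc F) (hu : u^3 - u^2 = 4 * RatFunc.X ^ d) : False := by
  have hmap : algebraMap (F[X]) (RatFunc F) (4 * X ^ d) = 4 * RatFunc.X ^ d := by
    rw [map_mul, map_pow, RatFunc.algebraMap_X, map_ofNat]
  have hm : ((X:(F[X])[X])^3 - X^2 - C (4 * X^d)).Monic := by monicity!
  have hint : IsIntegral (F[X]) u := by
    refine ⟨(X:(F[X])[X])^3 - X^2 - C (4 * X^d), hm, ?_⟩
    simp only [Polynomial.eval₂_sub, Polynomial.eval₂_pow, Polynomial.eval₂_X,
      Polynomial.eval₂_C]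
    rw [hmap, sub_sub, ← hu]
    ring
  obtain ⟨a, ha⟩ := IsIntegrallyClosed.isIntegral_iff.mp hint
  refine aux_poly h4 d hd a ?_
  apply IsFractionRing.injective (F[X]) (RatFunc F)
  have h4' : algebraMap (F[X]) (RatFunc F) (C 4) = 4 := by
    rw [map_ofNat C 4]; exact map_ofNat _ 4
  simp only [map_mul, map_pow, map_sub, map_one, RatFunc.algebraMap_X, ha, h4']
  linear_combination hu

open scoped Classical in
/-- **No 2-torsion on the Hessian curve.**  For `d ≥ 1` coprime to `q`, the group `E_d(K)`
of `K`-rational points on the Hessian elliptic curve `E_d : y² + xy - t^d y = x³` over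
`K = 𝔽_q(t)` contains no element of order `2`. -/
theorem hessian_no_two_torsion (p : ℕ) (hp : p.Prime) (hp5 : 5 ≤ p)
    (F : Type) [Field F] [Fintype F] [CharP F p]
    (d : ℕ) (hd : 1 ≤ d) (hcop : Nat.Coprime d (Fintype.card F))
    (W : WeierstrassCurve.Affine (RatFunc F))
    (hW : W = { a₁ := 1, a₂ := 0, a₃ := -(RatFunc.X ^ d), a₄ := 0, a₆ := 0 }) :
    ∀ P : W.Point, addOrderOf P ≠ 2 := by
  intro P hord
  have h4 : (4:F) ≠ 0 := by
    have : ((4:ℕ):F) ≠ 0 := by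
      rw [Ne, CharP.cast_eq_zero_iff F p]
      intro hdvd
      have := Nat.le_of_dvd (by norm_num) hdvd
      omega
    simpa using this
  have hP0 : P ≠ 0 := by
    intro h
    rw [h, addOrderOf_zero] at hord
    omega
  have h2 : P + P = 0 := by
    have := addOrderOf_nsmul_eq_zero P
    rw [hord, two_nsmul] at this
    exact this
  have hPneg : -P = P := neg_eq_of_add_eq_zero_right h2
  cases P with
  | zero => exact hP0 rfl
  | @some x y h =>
    rw [WeierstrassCurve.Affine.Point.neg_some] at hPneg
    have hy : W.negY x y = y := (WeierstrassCurve.Affine.Point.some.inj hPneg).2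
    have heq := h.1
    rw [WeierstrassCurve.Affine.equation_iff] at heq
    rw [hW] at heq hy
    simp only [WeierstrassCurve.Affine.negY] at hy heq
    norm_num at hy heq
    -- hy : -y - x + RatFunc.X ^ d = y ; heq : y^2 + x*y - X^d*y = x^3
    set T : RatFunc F := RatFunc.X ^ d with hTdef
    have hT : T ≠ 0 := pow_ne_zero _ RatFunc.X_ne_zero
    have hx3 : x^3 = -y^2 := by linear_combination -heq - y*hy
    have hx : x ≠ 0 := by
      intro h0
      rw [h0] at hx3
      have hy0 : y = 0 := by
        have : y^2 = 0 := by linear_combination hx3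
        exact pow_eq_zero_iff (by norm_num) |>.mp this
      rw [h0, hy0] at hy
      simp at hy
      exact hT hy
    have hu : ((-2*y)/x)^3 - ((-2*y)/x)^2 = 4 * RatFunc.X ^ d := by
      rw [← hTdef]
      field_simp
      linear_combination (4*y^2)*hy - (4*T)*hx3
    exact aux_ratfunc h4 d hd ((-2*y)/x) hu
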